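/- For the 'd-unique-values' hypothesis class, the minimax leave-one-out regret is at least d·log(N)/N + o(log(N)/N). Precisely: in the reduced problem where the learner chooses probabilities q_0, q_1, ..., q_{d-1} ∈ (0,1) and the regret of the configuration with i ones (0 ≤ i ≤ d) is R_i = -(i/N)·log(q_{i-1}) - ((N-i)/N)·log(1-q_i) for i < d (with R_0 = -log(1-q_0)) and R_d = -(d/N)·log(q_{d-1}), for every choice of q_0,...,q_{d-1}, max_{0≤i≤d} R_i ≥ d·log(N)/N + o(log(N)/N); equivalently, for every a < d there is N_0 such that for N ≥ N_0, max_i R_i > a·log(N)/N. -/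

import Mathlib

set_option maxHeartbeats 1000000


/-- Regret of the configuration with `i` ones (`0 ≤ i ≤ d`) in the reduced
`d`-unique-values leave-one-out problem: the learner assigns probability `q k` to a
held-out `1` when the training set contains `k` ones. -/
noncomputable def dUniqueRegret (d N : ℕ) (q : ℕ → ℝ) (i : ℕ) : ℝ :=
  (if 1 ≤ i then -((i : ℝ) / N) * Real.log (q (i - 1)) else 0) +
  (if i < d then -(((N : ℝ) - i) / N) * Real.log (1 - q i) else 0)

/-- For the `d`-unique-values class, the minimax leave-one-out regret is at
least `d·log(N)/N + o(log(N)/N)`: for every `a < d`, for all large enough `N`, every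
choice of probabilities `q 0, …, q (d-1) ∈ (0,1)` has `max_{0 ≤ i ≤ d} R_i > a·log(N)/N`. -/
theorem d_unique_values_lower_bound (d : ℕ) (hd : 1 ≤ d) (a : ℝ) (ha : a < d) :
    ∃ N₀ : ℕ, ∀ N : ℕ, N₀ ≤ N →
      ∀ q : ℕ → ℝ, (∀ k < d, q k ∈ Set.Ioo (0 : ℝ) 1) →
        ∃ i ≤ d, a * Real.log N / N < dUniqueRegret d N q i := by
  have hd' : (0:ℝ) < d := by exact_mod_cast hd
  rcases le_or_gt a 0 with ha0 | ha0
  · -- trivial case a ≤ 0: use i = 0, whose regret is strictly positive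
    refine ⟨1, fun N hN q hq => ⟨0, Nat.zero_le d, ?_⟩⟩
    have hq0 := hq 0 hd
    have hN0 : (0:ℝ) < N := by exact_mod_cast hN
    have hlog : Real.log (1 - q 0) < 0 :=
      Real.log_neg (by linarith [hq0.2]) (by linarith [hq0.1])
    have hT : a * Real.log N / N ≤ 0 := by
      have h1 : (0:ℝ) ≤ Real.log N := Real.log_nonneg (by exact_mod_cast hN)
      have h2 : a * Real.log N ≤ 0 := mul_nonpos_of_nonpos_of_nonneg ha0 h1
      exact div_nonpos_of_nonpos_of_nonneg h2 hN0.le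
    have heq : dUniqueRegret d N q 0 = -(((N:ℝ) - 0) / N) * Real.log (1 - q 0) := by
      rw [dUniqueRegret, if_neg (by omega : ¬ 1 ≤ 0), if_pos (by omega : 0 < d), zero_add]
      norm_num
    have hpos : 0 < dUniqueRegret d N q 0 := by
      rw [heq, sub_zero]
      have hNN : (N:ℝ)/N = 1 := div_self hN0.ne'
      rw [hNN]
      linarith
    linarith
  · -- main case 0 < a < d
    obtain ⟨ε, hε, hε_def⟩ : ∃ ε : ℝ, 0 < ε ∧ ε = 1 - a / d := by
      refine ⟨1 - a / d, ?_, rfl⟩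
      have : a / d < 1 := (div_lt_one hd').mpr ha
      linarith
    have key : ∀ᶠ x : ℝ in Filter.atTop, 2 * a * x < Real.exp (ε * x) := by
      have h2 : Filter.Tendsto (fun x : ℝ => ε * x) Filter.atTop Filter.atTop :=
        Filter.Tendsto.const_mul_atTop hε Filter.tendsto_id
      have h1 : Filter.Tendsto (fun x : ℝ => Real.exp (ε * x) / (ε * x))
          Filter.atTop Filter.atTop := by
        have h3 := Real.tendsto_exp_div_pow_atTop 1
        simpa [Function.comp_def] using h3.comp h2
      filter_upwards [h1.eventually_gt_atTop (2 * a / ε), Filter.eventually_gt_atTop 0]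
        with x hx hx0
      have hεx : 0 < ε * x := mul_pos hε hx0
      rw [lt_div_iff₀ hεx] at hx
      have hcalc : 2 * a / ε * (ε * x) = 2 * a * x := by field_simp
      linarith [hcalc ▸ hx]
    have keyN : ∀ᶠ N : ℕ in Filter.atTop,
        2 * a * Real.log (N:ℝ) < Real.exp (ε * Real.log (N:ℝ)) :=
      (Real.tendsto_log_atTop.comp tendsto_natCast_atTop_atTop).eventually key
    obtain ⟨N₀, hN₀⟩ := Filter.eventually_atTop.mp
      (keyN.and (Filter.eventually_ge_atTop (2 * d + 2)))
    refine ⟨N₀, fun N hN q hq => ?_⟩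
    obtain ⟨hkey, hNd⟩ := hN₀ N hN
    by_contra hcon
    push_neg at hcon
    -- hcon : ∀ i ≤ d, dUniqueRegret d N q i ≤ a * Real.log N / N
    have hNd' : (2:ℝ) * d + 2 ≤ N := by exact_mod_cast hNd
    have hn : (0:ℝ) < N := by linarith
    set L : ℝ := Real.log (N:ℝ) with hL_def
    have hL : 0 ≤ L := Real.log_nonneg (by linarith)
    have hexpL : Real.exp L = N := Real.exp_log hn
    set p : ℝ := q (d - 1) with hp_def
    have hp := hq (d - 1) (by omega)
    -- Constraint from i = d
    have hAraw := hcon d le_rfl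
    rw [dUniqueRegret, if_pos hd, if_neg (lt_irrefl d), add_zero] at hAraw
    -- hAraw : -((d:ℝ)/N) * Real.log p ≤ a * L / N
    -- Constraint from i = d - 1
    have hBraw := hcon (d - 1) (Nat.sub_le d 1)
    rw [dUniqueRegret, if_pos (Nat.sub_lt (by omega) one_pos)] at hBraw
    have hfirst : 0 ≤ (if 1 ≤ d - 1 then
        -(((d - 1 : ℕ) : ℝ) / N) * Real.log (q (d - 1 - 1)) else 0) := by
      split_ifs with h1
      · have hq2 := hq (d - 1 - 1) (by omega)
        have hlg : Real.log (q (d - 1 - 1)) < 0 := Real.log_neg hq2.1 hq2.2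
        have hcoef : 0 ≤ ((d - 1 : ℕ) : ℝ) / N := by positivity
        nlinarith
      · exact le_refl 0
    have hc : ((d - 1 : ℕ) : ℝ) = (d:ℝ) - 1 := by
      rw [Nat.cast_sub hd, Nat.cast_one]
    set M : ℝ := (N:ℝ) - ((d:ℝ) - 1) with hM_def
    have hM2 : (N:ℝ) / 2 ≤ M := by simp only [hM_def]; linarith
    have hM : 0 < M := by linarith
    have hB : -(M / N) * Real.log (1 - p) ≤ a * L / N := by
      rw [hM_def, ← hc]
      linarith [hBraw, hfirst]
    -- From hAraw: p ≥ exp(-(a*L)/d)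
    have hA' : -(d:ℝ) * Real.log p ≤ a * L := by
      have h := mul_le_mul_of_nonneg_right hAraw hn.le
      have e1 : a * L / N * N = a * L := div_mul_cancel₀ _ hn.ne'
      have e2 : -((d:ℝ) / N) * Real.log p * N = -(d:ℝ) * Real.log p := by
        field_simp
      rw [e1, e2] at h
      exact h
    have hlogp : -(a * L) / d ≤ Real.log p := by
      rw [div_le_iff₀ hd']
      nlinarith [hA']
    have hp1 : Real.exp (-(a * L) / d) ≤ p := by
      calc Real.exp (-(a * L) / d) ≤ Real.exp (Real.log p) := Real.exp_le_exp.mpr hlogp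
        _ = p := Real.exp_log hp.1
    -- From hB: p ≤ a*L/M
    have hB' : -M * Real.log (1 - p) ≤ a * L := by
      have h := mul_le_mul_of_nonneg_right hB hn.le
      have e1 : a * L / N * N = a * L := div_mul_cancel₀ _ hn.ne'
      have e2 : -(M / N) * Real.log (1 - p) * N = -M * Real.log (1 - p) := by
        field_simp
      rw [e1, e2] at h
      exact h
    have hlog1p : -(a * L) / M ≤ Real.log (1 - p) := by
      rw [div_le_iff₀ hM]
      nlinarith [hB']
    have h1p : 1 - a * L / M ≤ 1 - p := by
      have hexp : Real.exp (-(a * L) / M) ≤ 1 - p := by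
        calc Real.exp (-(a * L) / M) ≤ Real.exp (Real.log (1 - p)) :=
              Real.exp_le_exp.mpr hlog1p
          _ = 1 - p := Real.exp_log (by linarith [hp.2])
      have := Real.add_one_le_exp (-(a * L) / M)
      have heq : -(a * L) / M + 1 = 1 - a * L / M := by ring
      linarith [heq ▸ this]
    have hp2 : p ≤ a * L / M := by linarith
    have hp3 : p ≤ 2 * a * L / N := by
      have haL : 0 ≤ a * L := mul_nonneg ha0.le hL
      have h1 : a * L / M ≤ a * L / (N / 2) :=
        div_le_div_of_nonneg_left haL (by linarith) hM2
      have h2 : a * L / (N / 2) = 2 * a * L / N := by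
        field_simp
      linarith [h2 ▸ h1]
    -- Combine: exp(ε*L) ≤ 2*a*L, contradicting hkey
    have hcomb : Real.exp (-(a * L) / d) ≤ 2 * a * L / N := le_trans hp1 hp3
    have hmul : (N:ℝ) * Real.exp (-(a * L) / d) ≤ 2 * a * L := by
      have h := mul_le_mul_of_nonneg_left hcomb hn.le
      have e : (N:ℝ) * (2 * a * L / N) = 2 * a * L := by field_simp
      linarith [h, e]
    have heq2 : ε * L = L + -(a * L) / d := by rw [hε_def]; ring
    have heps : Real.exp (ε * L) = (N:ℝ) * Real.exp (-(a * L) / d) := by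
      rw [heq2, Real.exp_add, hexpL]
    linarith [hmul, hkey, heps.le, heps.ge]
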